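/- Let x ∈ int(Qⁿ) with det(x) = x₀² − ‖x̄‖² > 0 and x⁻¹ = (1/det(x))(x₀, −x̄). Then the Jacobian matrix of the map x ↦ x⁻¹ equals (1/det(x))·diag(1, −I_{n−1}) − 2·x⁻¹(x⁻¹)ᵀ. -/

import Mathlib

open RealInnerProductSpace

/-- For x in the interior of the second-order cone with det(x) = x₀² − ‖x̄‖²
and x⁻¹ = (1/det(x))(x₀, −x̄), the Jacobian of the map x ↦ x⁻¹ equals
(1/det(x))·diag(1, −I) − 2·x⁻¹(x⁻¹)ᵀ, i.e. it acts on h by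
h ↦ (1/det(x))·(h₀, −h̄) − 2⟨x⁻¹, h⟩·x⁻¹. -/
theorem stmt7 {E : Type*} [NormedAddCommGroup E] [InnerProductSpace ℝ E]
    (x : ℝ × E) (hx : ‖x.2‖ < x.1)
    (det : ℝ × E → ℝ) (hdet : ∀ y, det y = y.1 ^ 2 - ‖y.2‖ ^ 2)
    (F : ℝ × E → ℝ × E) (hF : ∀ y, F y = ((det y)⁻¹ * y.1, (det y)⁻¹ • (-y.2))) :
    ∃ L : (ℝ × E) →L[ℝ] (ℝ × E), HasFDerivAt F L x ∧
      ∀ h : ℝ × E,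
        L h = ((det x)⁻¹ * h.1 - 2 * ((F x).1 * h.1 + ⟪(F x).2, h.2⟫) * (F x).1,
               (det x)⁻¹ • (-h.2) - (2 * ((F x).1 * h.1 + ⟪(F x).2, h.2⟫)) • (F x).2) := by
  have hx1 : 0 < x.1 := lt_of_le_of_lt (norm_nonneg _) hx
  have hd0 : 0 < det x := by
    rw [hdet]; nlinarith [norm_nonneg x.2]
  have hd : det x ≠ 0 := ne_of_gt hd0
  have hdeq : det = fun y : ℝ × E => y.1 * y.1 - ⟪y.2, y.2⟫ := by
    funext y; rw [hdet, real_inner_self_eq_norm_sq]; ring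
  have hdet' : HasFDerivAt det
      ((x.1 • (ContinuousLinearMap.fst ℝ ℝ E) + x.1 • (ContinuousLinearMap.fst ℝ ℝ E)) -
        ((fderivInnerCLM ℝ (x.2, x.2)).comp
          ((ContinuousLinearMap.snd ℝ ℝ E).prod (ContinuousLinearMap.snd ℝ ℝ E)))) x := by
    rw [hdeq]
    exact (hasFDerivAt_fst.mul hasFDerivAt_fst).sub ((hasFDerivAt_snd).inner ℝ (hasFDerivAt_snd))
  have hinv := (hasDerivAt_inv hd).comp_hasFDerivAt x hdet'
  have h1 := hinv.mul (hasFDerivAt_fst (𝕜 := ℝ) (p := x))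
  have h2 := hinv.smul ((hasFDerivAt_snd (𝕜 := ℝ) (p := x)).neg)
  have hFeq : F = fun y : ℝ × E => ((det y)⁻¹ * y.1, (det y)⁻¹ • (-y.2)) := funext hF
  refine ⟨_, by rw [hFeq]; exact HasFDerivAt.prodMk h1 h2, ?_⟩
  intro h
  simp only [hF, ContinuousLinearMap.prod_apply, ContinuousLinearMap.add_apply,
    ContinuousLinearMap.smul_apply, ContinuousLinearMap.coe_smul', Pi.smul_apply,
    ContinuousLinearMap.smulRight_apply, ContinuousLinearMap.coe_fst',
    ContinuousLinearMap.coe_snd', ContinuousLinearMap.sub_apply,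
    ContinuousLinearMap.comp_apply, ContinuousLinearMap.neg_apply,
    fderivInnerCLM_apply, smul_eq_mul, Function.comp_apply, inner_neg_left,
    real_inner_smul_left, inner_neg_right]
  refine Prod.ext ?_ ?_
  · field_simp
    rw [real_inner_comm h.2 x.2]
    ring
  · rw [real_inner_comm h.2 x.2, Pi.neg_apply]
    match_scalars <;> (field_simp; try ring)
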